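/- Let k be a field, R = k[x₁,…,xₙ], I a monomial ideal of R with dim_k(R/I) < ∞, and M = R/I. Then the set R(M) = {m ∈ M : ∀ a ∈ R, a²m = 0 → am = 0} equals the socle of M, i.e., R(M) = (0 :_M ⟨x₁,…,xₙ⟩) = {m ∈ M : xᵢ·m = 0 for all i}. -/

import Mathlib

open MvPolynomial

/-- `I` is a monomial ideal of `k[x₁,…,xₙ]`. -/
def IsMonomialIdeal {k : Type*} [Field k] {n : ℕ}
    (I : Ideal (MvPolynomial (Fin n) k)) : Prop :=
  ∃ S : Set (Fin n →₀ ℕ), I = Ideal.span ((fun d => monomial d (1 : k)) '' S)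

/-- In a monomial ideal, the pure monomial at any exponent in the support of a member
is itself in the ideal. -/
lemma monomial_mem_of_coeff_ne_zero {k : Type*} [Field k] {n : ℕ}
    {I : Ideal (MvPolynomial (Fin n) k)} (hI : IsMonomialIdeal I)
    {f : MvPolynomial (Fin n) k} (hf : f ∈ I) {d : Fin n →₀ ℕ}
    (hd : coeff d f ≠ 0) : (monomial d (1 : k)) ∈ I := by
  obtain ⟨S, rfl⟩ := hI
  rw [mem_ideal_span_monomial_image] at hf ⊢
  intro xi hxi
  rw [mem_support_iff, coeff_monomial] at hxi
  have : d = xi := by by_contra h; simp [h] at hxi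
  subst this
  exact hf d (mem_support_iff.mpr hd)

theorem reduced_eq_socle {k : Type*} [Field k] [CharZero k] {n : ℕ}
    (I : Ideal (MvPolynomial (Fin n) k)) (hI : IsMonomialIdeal I)
    [FiniteDimensional k (MvPolynomial (Fin n) k ⧸ I)] :
    {m : MvPolynomial (Fin n) k ⧸ I |
        ∀ a : MvPolynomial (Fin n) k, a ^ 2 • m = 0 → a • m = 0} =
      {m : MvPolynomial (Fin n) k ⧸ I |
        ∀ i : Fin n, (X i : MvPolynomial (Fin n) k) • m = 0} := by
  ext m
  simp only [Set.mem_setOf_eq]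
  constructor
  · intro hm i
    -- X i is nilpotent mod I
    have hint : IsIntegral k (Ideal.Quotient.mk I (X i)) := IsIntegral.of_finite k _
    obtain ⟨p, hmonic, hp⟩ := hint
    set N := p.natDegree with hN
    have hf : (Polynomial.aeval (X i : MvPolynomial (Fin n) k) p) ∈ I := by
      rw [← Ideal.Quotient.eq_zero_iff_mem]
      have h2 : Ideal.Quotient.mk I (Polynomial.aeval (X i : MvPolynomial (Fin n) k) p) =
          Polynomial.aeval (Ideal.Quotient.mk I (X i)) p :=
        (Polynomial.aeval_algHom_apply (Ideal.Quotient.mkₐ k I) (X i) p).symm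
      rw [h2, Polynomial.aeval_def]
      exact hp
    have hcoeff : coeff (Finsupp.single i N)
        (Polynomial.aeval (X i : MvPolynomial (Fin n) k) p) = 1 := by
      rw [Polynomial.aeval_eq_sum_range, coeff_sum]
      simp only [coeff_smul, X_pow_eq_monomial, coeff_monomial, smul_eq_mul]
      rw [Finset.sum_eq_single N]
      · simp [hN, hmonic.coeff_natDegree]
      · intro j hj hne
        rw [if_neg, mul_zero]
        intro h
        exact hne ((Finsupp.single_injective i) h)
      · intro h
        exact absurd (Finset.self_mem_range_succ p.natDegree) h
    have hXN : ((X i : MvPolynomial (Fin n) k) ^ N) ∈ I := by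
      have := monomial_mem_of_coeff_ne_zero hI hf (d := Finsupp.single i N)
        (by rw [hcoeff]; exact one_ne_zero)
      rwa [← X_pow_eq_monomial] at this
    have h0 : (X i : MvPolynomial (Fin n) k) ^ N • m = 0 := by
      obtain ⟨y, rfl⟩ := Ideal.Quotient.mk_surjective m
      show Ideal.Quotient.mk I (X i ^ N * y) = 0
      rw [Ideal.Quotient.eq_zero_iff_mem]
      exact I.mul_mem_right y hXN
    -- now descend from 2^N
    have key : ∀ j : ℕ, (X i : MvPolynomial (Fin n) k) ^ (2 ^ j) • m = 0 →
        (X i : MvPolynomial (Fin n) k) • m = 0 := by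
      intro j
      induction j with
      | zero => intro h; rw [pow_zero, pow_one] at h; exact h
      | succ j ih =>
        intro h
        apply ih
        apply hm
        rw [← pow_mul, ← pow_succ]
        exact h
    apply key N
    have hle : N ≤ 2 ^ N := Nat.le_of_lt (Nat.lt_two_pow_self (n := N))
    calc (X i : MvPolynomial (Fin n) k) ^ (2 ^ N) • m
        = (X i : MvPolynomial (Fin n) k) ^ (2 ^ N - N) •
          ((X i : MvPolynomial (Fin n) k) ^ N • m) := by
          rw [← mul_smul, ← pow_add, Nat.sub_add_cancel hle]
      _ = 0 := by rw [h0, smul_zero]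
  · intro hm a ha
    have hspan : ∀ b : MvPolynomial (Fin n) k, constantCoeff b = 0 → b • m = 0 := by
      intro b hb
      have hmem : b ∈ Ideal.span (MvPolynomial.X '' (Set.univ : Set (Fin n)) :
          Set (MvPolynomial (Fin n) k)) := by
        rw [mem_ideal_span_X_image]
        intro d hd
        have hdne : d ≠ 0 := by
          rintro rfl
          rw [mem_support_iff] at hd
          exact hd hb
        obtain ⟨j, hj⟩ := Finsupp.ne_iff.mp hdne
        exact ⟨j, Set.mem_univ j, by simpa using hj⟩
      have hle : Ideal.span (MvPolynomial.X '' (Set.univ : Set (Fin n)) :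
          Set (MvPolynomial (Fin n) k)) ≤ Ideal.torsionOf _ _ m := by
        rw [Ideal.span_le]
        rintro _ ⟨j, -, rfl⟩
        exact hm j
      exact (Ideal.mem_torsionOf_iff m b).mp (hle hmem)
    have key : ∀ b : MvPolynomial (Fin n) k, b • m = constantCoeff b • m := by
      intro b
      have h1 := hspan (b - C (constantCoeff b)) (by simp)
      have h2 : (C (constantCoeff b) : MvPolynomial (Fin n) k) • m =
          constantCoeff b • m := by rw [← algebraMap_eq, algebraMap_smul]
      calc b • m = (b - C (constantCoeff b)) • m + (C (constantCoeff b)) • m := by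
            rw [← add_smul, sub_add_cancel]
        _ = constantCoeff b • m := by rw [h1, zero_add, h2]
    rw [key] at ha ⊢
    rw [map_pow] at ha
    rcases smul_eq_zero.mp ha with hc | hmz
    · rw [pow_eq_zero_iff (two_ne_zero)] at hc
      rw [hc, zero_smul]
    · rw [hmz, smul_zero]
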